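/- Let V be a vertex algebra and M a V-module. Define C₂(M) = span{a_{(−2)} m : a ∈ V, m ∈ M}. Then M/C₂(M) is a Poisson module over the Poisson algebra R_V = V/C₂(V), with actions ā·m̄ = (a_{(−1)}m)⁻ and {ā, m̄} = (a_{(0)}m)⁻; in particular these operations are well-defined on the quotients. -/
import Mathlib


/-- The generalized binomial coefficient `(p choose i)` for `p : ℤ`, as a complex number. -/
noncomputable def cc (p : ℤ) (i : ℕ) : ℂ :=
  (∏ k ∈ Finset.range i, ((p : ℂ) - (k : ℂ))) / (Nat.factorial i : ℂ)

/-- A vertex algebra structure on a complex vector space `V`: a vacuum `one`,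
bilinear products `nmul n a b = a_{(n)} b`, truncation, vacuum axioms, and the
Borcherds identity. -/
structure VertexAlg (V : Type*) [AddCommGroup V] [Module ℂ V] where
  one : V
  nmul : ℤ → V → V → V
  nmul_add_left : ∀ (n : ℤ) (a b c : V), nmul n (a + b) c = nmul n a c + nmul n b c
  nmul_add_right : ∀ (n : ℤ) (a b c : V), nmul n a (b + c) = nmul n a b + nmul n a c
  nmul_smul_left : ∀ (n : ℤ) (s : ℂ) (a b : V), nmul n (s • a) b = s • nmul n a b
  nmul_smul_right : ∀ (n : ℤ) (s : ℂ) (a b : V), nmul n a (s • b) = s • nmul n a b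
  one_nmul : ∀ (n : ℤ) (b : V), nmul n one b = if n = -1 then b else 0
  nmul_neg_one_one : ∀ a : V, nmul (-1) a one = a
  nmul_one : ∀ (a : V) (n : ℤ), 0 ≤ n → nmul n a one = 0
  trunc : ∀ a b : V, ∃ N : ℤ, ∀ n : ℤ, N ≤ n → nmul n a b = 0
  borcherds : ∀ (p q r : ℤ) (a b c : V),
    (∑ᶠ i : ℕ, cc p i • nmul (p + q - i) (nmul (r + i) a b) c)
      = ∑ᶠ i : ℕ, ((-1 : ℂ) ^ i * cc r i) •
          (nmul (p + r - i) a (nmul (q + i) b c)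
            - ((-1 : ℂ) ^ r) • nmul (q + r - i) b (nmul (p + i) a c))

/-- A module over a vertex algebra `(V, 𝒱)`: operators `act n a = a_{(n)}` on `M`
satisfying bilinearity, the vacuum axiom, truncation and the Borcherds identity. -/
structure VAModuleStr {V : Type*} [AddCommGroup V] [Module ℂ V] (𝒱 : VertexAlg V)
    (M : Type*) [AddCommGroup M] [Module ℂ M] where
  act : ℤ → V → M → M
  act_add_left : ∀ (n : ℤ) (a b : V) (m : M), act n (a + b) m = act n a m + act n b m
  act_add_right : ∀ (n : ℤ) (a : V) (m m' : M), act n a (m + m') = act n a m + act n a m'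
  act_smul_left : ∀ (n : ℤ) (s : ℂ) (a : V) (m : M), act n (s • a) m = s • act n a m
  act_smul_right : ∀ (n : ℤ) (s : ℂ) (a : V) (m : M), act n a (s • m) = s • act n a m
  one_act : ∀ (n : ℤ) (m : M), act n 𝒱.one m = if n = -1 then m else 0
  trunc : ∀ (a : V) (m : M), ∃ N : ℤ, ∀ n : ℤ, N ≤ n → act n a m = 0
  borcherds : ∀ (p q r : ℤ) (a b : V) (m : M),
    (∑ᶠ i : ℕ, cc p i • act (p + q - i) (𝒱.nmul (r + i) a b) m)
      = ∑ᶠ i : ℕ, ((-1 : ℂ) ^ i * cc r i) •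
          (act (p + r - i) a (act (q + i) b m)
            - ((-1 : ℂ) ^ r) • act (q + r - i) b (act (p + i) a m))

section Stmt10Aux

variable {V : Type*} [AddCommGroup V] [Module ℂ V] (𝒱 : VertexAlg V)
variable {M : Type*} [AddCommGroup M] [Module ℂ M] (𝓜 : VAModuleStr 𝒱 M)

private lemma cc_zero' (p : ℤ) : cc p 0 = 1 := by simp [cc]

private lemma cc_one' (p : ℤ) : cc p 1 = (p : ℂ) := by simp [cc]

private lemma cc_of_zero {i : ℕ} (hi : i ≠ 0) : cc 0 i = 0 := by
  have h0 : (0:ℕ) ∈ Finset.range i := Finset.mem_range.mpr (Nat.pos_of_ne_zero hi)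
  unfold cc
  rw [Finset.prod_eq_zero h0 (by simp)]
  simp

private lemma act_zero_left (n : ℤ) (m : M) : 𝓜.act n 0 m = 0 := by
  have h := 𝓜.act_smul_left n 0 0 m
  simpa using h

private lemma act_zero_right (n : ℤ) (a : V) : 𝓜.act n a 0 = 0 := by
  have h := 𝓜.act_smul_right n 0 a 0
  simpa using h

private lemma act_sub_left (n : ℤ) (a b : V) (m : M) :
    𝓜.act n (a - b) m = 𝓜.act n a m - 𝓜.act n b m := by
  have h := 𝓜.act_add_left n (a - b) b m
  rw [sub_add_cancel] at h
  exact eq_sub_of_add_eq h.symm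

private lemma act_sub_right (n : ℤ) (a : V) (m m' : M) :
    𝓜.act n a (m - m') = 𝓜.act n a m - 𝓜.act n a m' := by
  have h := 𝓜.act_add_right n a (m - m') m'
  rw [sub_add_cancel] at h
  exact eq_sub_of_add_eq h.symm

/-- Commutator formula. -/
private lemma commF (p q : ℤ) (a b : V) (m : M) :
    𝓜.act p a (𝓜.act q b m) - 𝓜.act q b (𝓜.act p a m)
      = ∑ᶠ i : ℕ, cc p i • 𝓜.act (p + q - (i:ℤ)) (𝒱.nmul (i:ℤ) a b) m := by
  have h := 𝓜.borcherds p q 0 a b m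
  have hz : ∀ i : ℕ, i ≠ 0 →
      ((-1 : ℂ) ^ i * cc 0 i) •
        (𝓜.act (p + 0 - (i:ℤ)) a (𝓜.act (q + (i:ℤ)) b m)
          - ((-1 : ℂ) ^ (0:ℤ)) • 𝓜.act (q + 0 - (i:ℤ)) b (𝓜.act (p + (i:ℤ)) a m)) = 0 := by
    intro i hi
    rw [cc_of_zero hi, mul_zero, zero_smul]
  rw [finsum_eq_single _ 0 hz] at h
  simp only [Nat.cast_zero, pow_zero, one_mul, cc_zero', one_smul, add_zero, sub_zero,
    zpow_zero, zero_add] at h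
  exact h.symm

private lemma comm0 (q : ℤ) (a b : V) (m : M) :
    𝓜.act q (𝒱.nmul 0 a b) m
      = 𝓜.act 0 a (𝓜.act q b m) - 𝓜.act q b (𝓜.act 0 a m) := by
  have h := commF 𝒱 𝓜 0 q a b m
  have hz : ∀ i : ℕ, i ≠ 0 →
      cc 0 i • 𝓜.act (0 + q - (i:ℤ)) (𝒱.nmul (i:ℤ) a b) m = 0 := by
    intro i hi
    rw [cc_of_zero hi, zero_smul]
  rw [finsum_eq_single _ 0 hz] at h
  simp only [Nat.cast_zero, cc_zero', one_smul, sub_zero, zero_add] at h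
  exact h.symm

/-- Iterate (associativity) formula, `p = 0` Borcherds. -/
private lemma iterate0 (q r : ℤ) (a b : V) (m : M) :
    𝓜.act q (𝒱.nmul r a b) m
      = ∑ᶠ i : ℕ, ((-1 : ℂ) ^ i * cc r i) •
          (𝓜.act (r - (i:ℤ)) a (𝓜.act (q + (i:ℤ)) b m)
            - ((-1 : ℂ) ^ r) • 𝓜.act (q + r - (i:ℤ)) b (𝓜.act (i:ℤ) a m)) := by
  have h := 𝓜.borcherds 0 q r a b m
  have hz : ∀ i : ℕ, i ≠ 0 →
      cc 0 i • 𝓜.act (0 + q - (i:ℤ)) (𝒱.nmul (r + (i:ℤ)) a b) m = 0 := by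
    intro i hi
    rw [cc_of_zero hi, zero_smul]
  rw [finsum_eq_single _ 0 hz] at h
  simp only [Nat.cast_zero, cc_zero', one_smul, add_zero, sub_zero, zero_add] at h
  exact h

/-- The translation formula: `(Ta)_{(p-1)} m = (1-p) a_{(p-2)} m` where `Ta = a_{(-2)}𝟙`. -/
private lemma trans_formula (p : ℤ) (a : V) (m : M) :
    𝓜.act (p - 1) (𝒱.nmul (-2) a 𝒱.one) m
      = (1 - (p : ℂ)) • 𝓜.act (p - 2) a m := by
  have h := 𝓜.borcherds p (-1) (-2) a 𝒱.one m
  have hz : ∀ i : ℕ, i ≠ 0 →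
      ((-1 : ℂ) ^ i * cc (-2) i) •
        (𝓜.act (p + -2 - (i:ℤ)) a (𝓜.act (-1 + (i:ℤ)) 𝒱.one m)
          - ((-1 : ℂ) ^ (-2 : ℤ)) • 𝓜.act (-1 + -2 - (i:ℤ)) 𝒱.one (𝓜.act (p + (i:ℤ)) a m)) = 0 := by
    intro i hi
    have e1 : 𝓜.act (-1 + (i:ℤ)) 𝒱.one m = 0 := by
      rw [𝓜.one_act, if_neg (by omega)]
    have e2 : 𝓜.act (-1 + -2 - (i:ℤ)) 𝒱.one (𝓜.act (p + (i:ℤ)) a m) = 0 := by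
      rw [𝓜.one_act, if_neg (by omega)]
    rw [e1, e2, act_zero_right 𝒱 𝓜]
    simp
  rw [finsum_eq_single _ 0 hz] at h
  have hsupp : Function.support (fun i : ℕ =>
      cc p i • 𝓜.act (p + -1 - (i:ℤ)) (𝒱.nmul (-2 + (i:ℤ)) a 𝒱.one) m)
      ⊆ ↑({0, 1} : Finset ℕ) := by
    intro i hi
    simp only [Function.mem_support] at hi
    simp only [Finset.coe_insert, Finset.coe_singleton, Set.mem_insert_iff,
      Set.mem_singleton_iff]
    by_contra hc
    push_neg at hc
    rw [𝒱.nmul_one a _ (by omega), act_zero_left 𝒱 𝓜, smul_zero] at hi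
    exact hi rfl
  rw [finsum_eq_finset_sum_of_support_subset _ hsupp] at h
  rw [show ({0,1} : Finset ℕ) = insert 0 {1} from rfl,
      Finset.sum_insert (by decide), Finset.sum_singleton] at h
  have i1 : (p + -1 - ((0:ℕ):ℤ)) = p - 1 := by omega
  have i2 : ((-2:ℤ) + ((0:ℕ):ℤ)) = -2 := by omega
  have i3 : (p + -1 - ((1:ℕ):ℤ)) = p - 2 := by omega
  have i4 : ((-2:ℤ) + ((1:ℕ):ℤ)) = -1 := by omega
  have i5 : (p + -2 - ((0:ℕ):ℤ)) = p - 2 := by omega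
  have i6 : ((-1:ℤ) + ((0:ℕ):ℤ)) = -1 := by omega
  have i7 : ((-1:ℤ) + -2 - ((0:ℕ):ℤ)) = -3 := by omega
  rw [i1, i2, i3, i4, i5, i6, i7, cc_zero', cc_one', 𝒱.nmul_neg_one_one, one_smul] at h
  have e3 : 𝓜.act (-1) 𝒱.one m = m := by rw [𝓜.one_act, if_pos rfl]
  have e4 : 𝓜.act (-3) 𝒱.one (𝓜.act (p + ((0:ℕ):ℤ)) a m) = 0 := by
    rw [𝓜.one_act, if_neg (by norm_num)]
  rw [e3, e4, smul_zero, sub_zero] at h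
  simp only [Nat.cast_zero, pow_zero, one_mul, cc_zero', one_smul] at h
  rw [sub_smul, one_smul]
  exact eq_sub_of_add_eq h

private lemma low_mem (C2M : Submodule ℂ M)
    (h1 : ∀ (a : V) (m : M), 𝓜.act (-2) a m ∈ C2M) :
    ∀ n : ℤ, n ≤ -2 → ∀ (a : V) (m : M), 𝓜.act n a m ∈ C2M := by
  suffices hk : ∀ k : ℕ, ∀ (a : V) (m : M), 𝓜.act (-2 - (k:ℤ)) a m ∈ C2M by
    intro n hn a m
    have h2 : -2 - (((-2 - n).toNat : ℕ) : ℤ) = n := by omega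
    have := hk (-2 - n).toNat a m
    rwa [h2] at this
  intro k
  induction k with
  | zero => intro a m; simpa using h1 a m
  | succ k ih =>
    intro a m
    have h := trans_formula 𝒱 𝓜 (-1 - (k:ℤ)) a m
    have hc : (1 - ((-1 - (k:ℤ) : ℤ) : ℂ)) = ((k + 2 : ℕ) : ℂ) := by push_cast; ring
    have hcn : ((k + 2 : ℕ) : ℂ) ≠ 0 := Nat.cast_ne_zero.mpr (by omega)
    have e1 : (-1 : ℤ) - (k:ℤ) - 1 = -2 - (k:ℤ) := by ring
    have e2 : (-1 : ℤ) - (k:ℤ) - 2 = -2 - ((k+1:ℕ):ℤ) := by omega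
    rw [e1, e2, hc] at h
    have he : 𝓜.act (-2 - ((k+1:ℕ):ℤ)) a m
        = (((k + 2 : ℕ) : ℂ))⁻¹ • 𝓜.act (-2 - (k:ℤ)) (𝒱.nmul (-2) a 𝒱.one) m := by
      rw [h, inv_smul_smul₀ hcn]
    rw [he]
    exact C2M.smul_mem _ (ih _ _)

private lemma finsum_mem_submodule' {N : Type*} [AddCommGroup N] [Module ℂ N]
    (S : Submodule ℂ N) (f : ℕ → N) (hf : (Function.support f).Finite)
    (h : ∀ i, f i ∈ S) : (∑ᶠ i, f i) ∈ S := by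
  rw [finsum_eq_sum f hf]
  exact Submodule.sum_mem _ fun i _ => h i

private lemma support_finite_of_bound {N : Type*} [AddCommGroup N]
    (f : ℕ → N) (Nb : ℤ) (h : ∀ i : ℕ, Nb ≤ (i:ℤ) → f i = 0) :
    (Function.support f).Finite := by
  apply Set.Finite.subset (Finset.range Nb.toNat).finite_toSet
  intro i hi
  simp only [Function.mem_support] at hi
  simp only [Finset.coe_range, Set.mem_Iio]
  by_contra hlt
  exact hi (h i (by omega))

private lemma left_stable (C2M : Submodule ℂ M)
    (h1 : ∀ (a : V) (m : M), 𝓜.act (-2) a m ∈ C2M)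
    (q : ℤ) (hq : q ≤ 0) (b c : V) (m : M) :
    𝓜.act q (𝒱.nmul (-2) b c) m ∈ C2M := by
  rw [iterate0 𝒱 𝓜 q (-2) b c m]
  obtain ⟨N1, hN1⟩ := 𝓜.trunc c m
  obtain ⟨N2, hN2⟩ := 𝓜.trunc b m
  apply finsum_mem_submodule'
  · apply support_finite_of_bound _ (max (N1 - q) N2)
    intro i hi
    rw [hN1 (q + (i:ℤ)) (by omega), hN2 (i:ℤ) (by omega), act_zero_right 𝒱 𝓜,
      act_zero_right 𝒱 𝓜]
    simp
  · intro i
    exact Submodule.smul_mem _ _ (sub_mem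
      (low_mem 𝒱 𝓜 C2M h1 _ (by omega) _ _)
      (Submodule.smul_mem _ _ (low_mem 𝒱 𝓜 C2M h1 _ (by omega) _ _)))

private lemma right_stable (C2M : Submodule ℂ M)
    (h1 : ∀ (a : V) (m : M), 𝓜.act (-2) a m ∈ C2M)
    (p : ℤ) (hp : p ≤ 0) (a b : V) (m : M) :
    𝓜.act p a (𝓜.act (-2) b m) ∈ C2M := by
  have h := eq_add_of_sub_eq (commF 𝒱 𝓜 p (-2) a b m)
  rw [h]
  refine add_mem ?_ (h1 _ _)
  obtain ⟨N, hN⟩ := 𝒱.trunc a b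
  apply finsum_mem_submodule'
  · apply support_finite_of_bound _ N
    intro i hi
    rw [hN (i:ℤ) hi, act_zero_left 𝒱 𝓜, smul_zero]
  · intro i
    exact Submodule.smul_mem _ _ (low_mem 𝒱 𝓜 C2M h1 _ (by omega) _ _)

private lemma mem_act_right (C2M : Submodule ℂ M)
    (hC2M : C2M = Submodule.span ℂ {y : M | ∃ (a : V) (m : M), y = 𝓜.act (-2) a m})
    (p : ℤ) (hp : p ≤ 0) (a : V) {m : M} (hm : m ∈ C2M) : 𝓜.act p a m ∈ C2M := by
  have h1 : ∀ (a : V) (m : M), 𝓜.act (-2) a m ∈ C2M := fun a m => by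
    rw [hC2M]; exact Submodule.subset_span ⟨a, m, rfl⟩
  rw [hC2M] at hm
  rw [hC2M]
  induction hm using Submodule.span_induction with
  | mem x hx =>
    obtain ⟨b, m', rfl⟩ := hx
    rw [← hC2M]; exact right_stable 𝒱 𝓜 C2M h1 p hp a b m'
  | zero => rw [act_zero_right 𝒱 𝓜]; exact Submodule.zero_mem _
  | add x y hx hy ihx ihy => rw [𝓜.act_add_right]; exact add_mem ihx ihy
  | smul s x hx ih => rw [𝓜.act_smul_right]; exact Submodule.smul_mem _ _ ih

private lemma mem_act_left (C2V : Submodule ℂ V)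
    (hC2V : C2V = Submodule.span ℂ {y : V | ∃ a b : V, y = 𝒱.nmul (-2) a b})
    (C2M : Submodule ℂ M)
    (h1 : ∀ (a : V) (m : M), 𝓜.act (-2) a m ∈ C2M)
    (q : ℤ) (hq : q ≤ 0) {a : V} (ha : a ∈ C2V) (m : M) : 𝓜.act q a m ∈ C2M := by
  rw [hC2V] at ha
  induction ha using Submodule.span_induction with
  | mem x hx =>
    obtain ⟨b, c, rfl⟩ := hx
    exact left_stable 𝒱 𝓜 C2M h1 q hq b c m
  | zero => rw [act_zero_left 𝒱 𝓜]; exact Submodule.zero_mem _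
  | add x y hx hy ihx ihy => rw [𝓜.act_add_left]; exact add_mem ihx ihy
  | smul s x hx ih => rw [𝓜.act_smul_left]; exact Submodule.smul_mem _ _ ih

/-- Well-definedness of the induced operations on the quotients. -/
private lemma wd (C2V : Submodule ℂ V)
    (hC2V : C2V = Submodule.span ℂ {y : V | ∃ a b : V, y = 𝒱.nmul (-2) a b})
    (C2M : Submodule ℂ M)
    (hC2M : C2M = Submodule.span ℂ {y : M | ∃ (a : V) (m : M), y = 𝓜.act (-2) a m})
    (n : ℤ) (hn : n ≤ 0) {a₁ a₂ : V} {m₁ m₂ : M}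
    (ha : (Submodule.Quotient.mk a₁ : V ⧸ C2V) = Submodule.Quotient.mk a₂)
    (hm : (Submodule.Quotient.mk m₁ : M ⧸ C2M) = Submodule.Quotient.mk m₂) :
    (Submodule.Quotient.mk (𝓜.act n a₁ m₁) : M ⧸ C2M)
      = Submodule.Quotient.mk (𝓜.act n a₂ m₂) := by
  rw [Submodule.Quotient.eq] at ha hm ⊢
  have h1 : ∀ (a : V) (m : M), 𝓜.act (-2) a m ∈ C2M := fun a m => by
    rw [hC2M]; exact Submodule.subset_span ⟨a, m, rfl⟩
  have key : 𝓜.act n a₁ m₁ - 𝓜.act n a₂ m₂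
      = 𝓜.act n (a₁ - a₂) m₁ + 𝓜.act n a₂ (m₁ - m₂) := by
    rw [act_sub_left 𝒱 𝓜, act_sub_right 𝒱 𝓜]
    abel
  rw [key]
  exact add_mem (mem_act_left 𝒱 𝓜 C2V hC2V C2M h1 n hn ha m₁)
    (mem_act_right 𝒱 𝓜 C2M hC2M n hn a₂ hm)

/-- The key approximate identity: `(a_{(-1)}b)_{(0)} ≡ a_{(-1)}b_{(0)} + b_{(-1)}a_{(0)}`
modulo `C₂(M)`. -/
private lemma poisson3 (C2M : Submodule ℂ M)
    (h1 : ∀ (a : V) (m : M), 𝓜.act (-2) a m ∈ C2M) (a b : V) (m : M) :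
    𝓜.act 0 (𝒱.nmul (-1) a b) m
      - (𝓜.act (-1) a (𝓜.act 0 b m) + 𝓜.act (-1) b (𝓜.act 0 a m)) ∈ C2M := by
  obtain ⟨N1, hN1⟩ := 𝓜.trunc b m
  obtain ⟨N2, hN2⟩ := 𝓜.trunc a m
  have hsupp : Function.support (fun i : ℕ => ((-1 : ℂ) ^ i * cc (-1) i) •
      (𝓜.act (-1 - (i:ℤ)) a (𝓜.act (0 + (i:ℤ)) b m)
        - ((-1 : ℂ) ^ (-1:ℤ)) • 𝓜.act (0 + -1 - (i:ℤ)) b (𝓜.act (i:ℤ) a m)))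
      ⊆ ↑(Finset.range ((max N1 N2).toNat + 1)) := by
    intro i hi
    simp only [Function.mem_support] at hi
    simp only [Finset.coe_range, Set.mem_Iio]
    by_contra hc
    rw [hN1 _ (by omega), hN2 _ (by omega), act_zero_right 𝒱 𝓜, act_zero_right 𝒱 𝓜] at hi
    simp at hi
  rw [iterate0 𝒱 𝓜 0 (-1) a b m,
    finsum_eq_finset_sum_of_support_subset _ hsupp, Finset.sum_range_succ']
  have hf0 : ((-1 : ℂ) ^ (0:ℕ) * cc (-1) 0) •
      (𝓜.act (-1 - ((0:ℕ):ℤ)) a (𝓜.act (0 + ((0:ℕ):ℤ)) b m)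
        - ((-1 : ℂ) ^ (-1:ℤ)) • 𝓜.act (0 + -1 - ((0:ℕ):ℤ)) b (𝓜.act ((0:ℕ):ℤ) a m))
      = 𝓜.act (-1) a (𝓜.act 0 b m) + 𝓜.act (-1) b (𝓜.act 0 a m) := by
    norm_num [cc_zero']
  rw [hf0, add_sub_cancel_right]
  apply Submodule.sum_mem
  intro i _
  exact Submodule.smul_mem _ _ (sub_mem
    (low_mem 𝒱 𝓜 C2M h1 _ (by omega) _ _)
    (Submodule.smul_mem _ _ (low_mem 𝒱 𝓜 C2M h1 _ (by omega) _ _)))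

/-- `V` as a module over itself. -/
private def selfMod : VAModuleStr 𝒱 V where
  act := 𝒱.nmul
  act_add_left := 𝒱.nmul_add_left
  act_add_right := 𝒱.nmul_add_right
  act_smul_left := 𝒱.nmul_smul_left
  act_smul_right := 𝒱.nmul_smul_right
  one_act := 𝒱.one_nmul
  trunc := 𝒱.trunc
  borcherds := 𝒱.borcherds

end Stmt10Aux

/-- For a vertex algebra `V` and a `V`-module `M`, with
`C₂(M) = span{a_{(-2)} m}`, the quotient `M/C₂(M)` is a Poisson module over
Zhu's `C₂`-algebra `R_V = V/C₂(V)`, via `ā·m̄ = (a_{(-1)}m)⁻` and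
`{ā, m̄} = (a_{(0)}m)⁻`; in particular these operations are well defined on the
quotients. -/
theorem stmt10 {V : Type*} [AddCommGroup V] [Module ℂ V] (𝒱 : VertexAlg V)
    {M : Type*} [AddCommGroup M] [Module ℂ M] (𝓜 : VAModuleStr 𝒱 M)
    (C2V : Submodule ℂ V)
    (hC2V : C2V = Submodule.span ℂ {y : V | ∃ a b : V, y = 𝒱.nmul (-2) a b})
    (C2M : Submodule ℂ M)
    (hC2M : C2M = Submodule.span ℂ {y : M | ∃ (a : V) (m : M), y = 𝓜.act (-2) a m}) :
    ∃ (mulR : (V ⧸ C2V) → (V ⧸ C2V) → (V ⧸ C2V))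
      (brR : (V ⧸ C2V) → (V ⧸ C2V) → (V ⧸ C2V))
      (sm : (V ⧸ C2V) → (M ⧸ C2M) → (M ⧸ C2M))
      (brM : (V ⧸ C2V) → (M ⧸ C2M) → (M ⧸ C2M)),
      -- well-definedness: the operations are induced by `a_{(-1)}` and `a_{(0)}`
      (∀ a b : V, mulR (Submodule.Quotient.mk a) (Submodule.Quotient.mk b) =
        Submodule.Quotient.mk (𝒱.nmul (-1) a b)) ∧
      (∀ a b : V, brR (Submodule.Quotient.mk a) (Submodule.Quotient.mk b) =
        Submodule.Quotient.mk (𝒱.nmul 0 a b)) ∧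
      (∀ (a : V) (m : M), sm (Submodule.Quotient.mk a) (Submodule.Quotient.mk m) =
        Submodule.Quotient.mk (𝓜.act (-1) a m)) ∧
      (∀ (a : V) (m : M), brM (Submodule.Quotient.mk a) (Submodule.Quotient.mk m) =
        Submodule.Quotient.mk (𝓜.act 0 a m)) ∧
      -- Poisson module axioms
      (∀ (r s : V ⧸ C2V) (m : M ⧸ C2M),
        brM (brR r s) m = brM r (brM s m) - brM s (brM r m)) ∧
      (∀ (r s : V ⧸ C2V) (m : M ⧸ C2M),
        brM r (sm s m) = sm (brR r s) m + sm s (brM r m)) ∧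
      (∀ (r s : V ⧸ C2V) (m : M ⧸ C2M),
        brM (mulR r s) m = sm r (brM s m) + sm s (brM r m)) := by
  classical
  have hC2V' : C2V = Submodule.span ℂ
      {y : V | ∃ (a : V) (m : V), y = (selfMod 𝒱).act (-2) a m} := hC2V
  have h1M : ∀ (a : V) (m : M), 𝓜.act (-2) a m ∈ C2M := fun a m => by
    rw [hC2M]; exact Submodule.subset_span ⟨a, m, rfl⟩
  set mulR : (V ⧸ C2V) → (V ⧸ C2V) → (V ⧸ C2V) :=
    fun x y => Submodule.Quotient.mk (𝒱.nmul (-1) x.out y.out) with hmulR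
  set brR : (V ⧸ C2V) → (V ⧸ C2V) → (V ⧸ C2V) :=
    fun x y => Submodule.Quotient.mk (𝒱.nmul 0 x.out y.out) with hbrR
  set sm : (V ⧸ C2V) → (M ⧸ C2M) → (M ⧸ C2M) :=
    fun x y => Submodule.Quotient.mk (𝓜.act (-1) x.out y.out) with hsm
  set brM : (V ⧸ C2V) → (M ⧸ C2M) → (M ⧸ C2M) :=
    fun x y => Submodule.Quotient.mk (𝓜.act 0 x.out y.out) with hbrM
  have cmul : ∀ a b : V, mulR (Submodule.Quotient.mk a) (Submodule.Quotient.mk b) =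
      Submodule.Quotient.mk (𝒱.nmul (-1) a b) := fun a b =>
    wd 𝒱 (selfMod 𝒱) C2V hC2V' C2V hC2V' (-1) (by norm_num)
      (Quotient.out_eq _) (Quotient.out_eq _)
  have cbr : ∀ a b : V, brR (Submodule.Quotient.mk a) (Submodule.Quotient.mk b) =
      Submodule.Quotient.mk (𝒱.nmul 0 a b) := fun a b =>
    wd 𝒱 (selfMod 𝒱) C2V hC2V' C2V hC2V' 0 le_rfl
      (Quotient.out_eq _) (Quotient.out_eq _)
  have csm : ∀ (a : V) (m : M), sm (Submodule.Quotient.mk a) (Submodule.Quotient.mk m) =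
      Submodule.Quotient.mk (𝓜.act (-1) a m) := fun a m =>
    wd 𝒱 𝓜 C2V hC2V C2M hC2M (-1) (by norm_num)
      (Quotient.out_eq _) (Quotient.out_eq _)
  have cbrM : ∀ (a : V) (m : M), brM (Submodule.Quotient.mk a) (Submodule.Quotient.mk m) =
      Submodule.Quotient.mk (𝓜.act 0 a m) := fun a m =>
    wd 𝒱 𝓜 C2V hC2V C2M hC2M 0 le_rfl
      (Quotient.out_eq _) (Quotient.out_eq _)
  refine ⟨mulR, brR, sm, brM, cmul, cbr, csm, cbrM, ?_, ?_, ?_⟩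
  · intro r s m
    obtain ⟨a, rfl⟩ := Submodule.Quotient.mk_surjective C2V r
    obtain ⟨b, rfl⟩ := Submodule.Quotient.mk_surjective C2V s
    obtain ⟨m', rfl⟩ := Submodule.Quotient.mk_surjective C2M m
    rw [cbr a b, cbrM b m', cbrM a m', cbrM (𝒱.nmul 0 a b) m',
      cbrM a (𝓜.act 0 b m'), cbrM b (𝓜.act 0 a m'), ← Submodule.Quotient.mk_sub]
    exact congrArg _ (comm0 𝒱 𝓜 0 a b m')
  · intro r s m
    obtain ⟨a, rfl⟩ := Submodule.Quotient.mk_surjective C2V r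
    obtain ⟨b, rfl⟩ := Submodule.Quotient.mk_surjective C2V s
    obtain ⟨m', rfl⟩ := Submodule.Quotient.mk_surjective C2M m
    rw [csm b m', cbrM a (𝓜.act (-1) b m'), cbr a b, csm (𝒱.nmul 0 a b) m',
      cbrM a m', csm b (𝓜.act 0 a m'), ← Submodule.Quotient.mk_add]
    refine congrArg _ ?_
    rw [comm0 𝒱 𝓜 (-1) a b m']
    abel
  · intro r s m
    obtain ⟨a, rfl⟩ := Submodule.Quotient.mk_surjective C2V r
    obtain ⟨b, rfl⟩ := Submodule.Quotient.mk_surjective C2V s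
    obtain ⟨m', rfl⟩ := Submodule.Quotient.mk_surjective C2M m
    rw [cmul a b, cbrM (𝒱.nmul (-1) a b) m', cbrM b m', cbrM a m',
      csm a (𝓜.act 0 b m'), csm b (𝓜.act 0 a m'), ← Submodule.Quotient.mk_add,
      Submodule.Quotient.eq]
    exact poisson3 𝒱 𝓜 C2M h1M a b m'
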